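/- For integers g ≥ 0 and h with 0 ≤ h, the coefficient of x^h in the power series expansion of (1+xt)^{2g} / ((1-x)(1-xt^2)) equals the Poincaré polynomial P_t(S^h X) of the h-th symmetric product of a compact Riemann surface X of genus g; in particular for h > 2g-2, this coefficient, as a polynomial in t, can be computed as the negative of the residue at x=1 plus the residue at x=1/t^2 of (1+xt)^{2g} / (x^{h+1}(1-x)(1-xt^2)). -/

import Mathlib

/-- Macdonald's generating function for the Poincaré polynomials of symmetric products
of a genus-g curve: F(x) = (1+xt)^{2g} / ((1-x)(1-xt²)), as a power series in x with
polynomial coefficients in t. -/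
noncomputable def macdonaldF (g : ℕ) : PowerSeries (Polynomial ℚ) :=
  (1 + PowerSeries.X * PowerSeries.C (Polynomial.X : Polynomial ℚ)) ^ (2 * g) *
    PowerSeries.mk (fun _ => (1 : Polynomial ℚ)) *
    PowerSeries.mk (fun m => (Polynomial.X : Polynomial ℚ) ^ (2 * m))

private lemma geom_aux (n : ℕ) :
    (1 - (Polynomial.X : Polynomial ℚ) ^ 2) * ∑ j ∈ Finset.range n, Polynomial.X ^ (2 * j) =
      1 - Polynomial.X ^ (2 * n) := by
  simp_rw [pow_mul]
  linear_combination -geom_sum_mul ((Polynomial.X : Polynomial ℚ) ^ 2) n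

private lemma coeff_B (n a : ℕ) :
    PowerSeries.coeff a
      ((1 + PowerSeries.X * PowerSeries.C (Polynomial.X : Polynomial ℚ)) ^ n) =
      if a ≤ n then (n.choose a : Polynomial ℚ) * Polynomial.X ^ a else 0 := by
  rw [add_comm, add_pow]
  simp only [one_pow, mul_one, map_sum]
  have hterm : ∀ k, (PowerSeries.X * PowerSeries.C (Polynomial.X : Polynomial ℚ)) ^ k *
      ((n.choose k : ℕ) : PowerSeries (Polynomial ℚ)) =
      PowerSeries.C ((n.choose k : Polynomial ℚ) * Polynomial.X ^ k) *
        PowerSeries.X ^ k := by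
    intro k
    simp only [mul_pow, map_mul, map_pow, map_natCast]
    ring
  simp_rw [hterm, PowerSeries.coeff_C_mul, PowerSeries.coeff_X_pow, mul_ite, mul_one, mul_zero]
  rw [Finset.sum_ite_eq (Finset.range (n + 1)) a]
  simp [Nat.lt_succ_iff]

private lemma binom_aux (n : ℕ) :
    ((1 : Polynomial ℚ) + Polynomial.X) ^ n =
      ∑ k ∈ Finset.range (n + 1), (n.choose k : Polynomial ℚ) * Polynomial.X ^ k := by
  rw [add_comm, add_pow]
  refine Finset.sum_congr rfl fun k _ => by ring

theorem stmt_6 (g h : ℕ) (hh : 2 * (g : ℤ) - 2 < (h : ℤ)) :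
    PowerSeries.coeff h (macdonaldF g) =
      (1 + Polynomial.X) ^ (2 * g) * ∑ j ∈ Finset.range (h + 1 - g), Polynomial.X ^ (2 * j) ∧
    (1 - Polynomial.X ^ 2) * PowerSeries.coeff h (macdonaldF g) =
      (1 + Polynomial.X) ^ (2 * g) * (1 - Polynomial.X ^ (2 * h + 2 - 2 * g)) := by
  have hg : 2 * g ≤ h + 1 := by omega
  -- coefficient of the geometric part
  have hS : ∀ m : ℕ, PowerSeries.coeff m
      (PowerSeries.mk (fun _ => (1 : Polynomial ℚ)) *
        PowerSeries.mk (fun m => (Polynomial.X : Polynomial ℚ) ^ (2 * m))) =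
      ∑ c ∈ Finset.range (m + 1), (Polynomial.X : Polynomial ℚ) ^ (2 * c) := by
    intro m
    rw [PowerSeries.coeff_mul]
    simp only [PowerSeries.coeff_mk, one_mul]
    rw [Finset.Nat.sum_antidiagonal_eq_sum_range_succ_mk]
    have := Finset.sum_range_reflect
      (fun c => (Polynomial.X : Polynomial ℚ) ^ (2 * c)) (m + 1)
    simpa using this
  -- the key identity
  have K : (1 - Polynomial.X ^ 2) * PowerSeries.coeff h (macdonaldF g) =
      ((1 : Polynomial ℚ) + Polynomial.X) ^ (2 * g) *
        (1 - Polynomial.X ^ (2 * h + 2 - 2 * g)) := by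
    rw [macdonaldF, mul_assoc, PowerSeries.coeff_mul, Finset.mul_sum]
    have hterm : ∀ p ∈ Finset.HasAntidiagonal.antidiagonal h,
        (1 - Polynomial.X ^ 2) * (PowerSeries.coeff p.1
            ((1 + PowerSeries.X * PowerSeries.C (Polynomial.X : Polynomial ℚ)) ^ (2 * g)) *
          PowerSeries.coeff p.2
            (PowerSeries.mk (fun _ => (1 : Polynomial ℚ)) *
              PowerSeries.mk (fun m => (Polynomial.X : Polynomial ℚ) ^ (2 * m)))) =
        if p.1 ≤ 2 * g then ((2 * g).choose p.1 : Polynomial ℚ) *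
          (Polynomial.X ^ p.1 - Polynomial.X ^ (2 * h + 2 - p.1)) else 0 := by
      intro p hp
      have hph : p.1 + p.2 = h := Finset.HasAntidiagonal.mem_antidiagonal.mp hp
      rw [coeff_B, hS]
      rcases le_or_gt p.1 (2 * g) with hle | hlt
      · rw [if_pos hle, if_pos hle, show 2 * h + 2 - p.1 = p.1 + 2 * (p.2 + 1) by omega]
        linear_combination (((2 * g).choose p.1 : Polynomial ℚ) * Polynomial.X ^ p.1) *
          geom_aux (p.2 + 1)
      · rw [if_neg (not_le.mpr hlt), if_neg (not_le.mpr hlt)]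
        simp
    rw [Finset.sum_congr rfl hterm, Finset.Nat.sum_antidiagonal_eq_sum_range_succ_mk]
    -- extend the sum to range (h+2)
    have hext : ∑ k ∈ Finset.range (h + 1),
        (if k ≤ 2 * g then ((2 * g).choose k : Polynomial ℚ) *
          (Polynomial.X ^ k - Polynomial.X ^ (2 * h + 2 - k)) else 0) =
        ∑ k ∈ Finset.range (h + 2),
        (if k ≤ 2 * g then ((2 * g).choose k : Polynomial ℚ) *
          (Polynomial.X ^ k - Polynomial.X ^ (2 * h + 2 - k)) else 0) := by
      apply Finset.sum_subset (Finset.range_subset_range.mpr (by omega))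
      intro x hx hx'
      simp only [Finset.mem_range] at hx hx'
      have hx1 : x = h + 1 := by omega
      subst hx1
      rcases le_or_gt (h + 1) (2 * g) with hle | hlt
      · rw [if_pos hle, show 2 * h + 2 - (h + 1) = h + 1 by omega]
        simp
      · rw [if_neg (not_le.mpr hlt)]
    -- shrink the sum to range (2g+1)
    have hshr : ∑ k ∈ Finset.range (2 * g + 1),
        (if k ≤ 2 * g then ((2 * g).choose k : Polynomial ℚ) *
          (Polynomial.X ^ k - Polynomial.X ^ (2 * h + 2 - k)) else 0) =
        ∑ k ∈ Finset.range (h + 2),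
        (if k ≤ 2 * g then ((2 * g).choose k : Polynomial ℚ) *
          (Polynomial.X ^ k - Polynomial.X ^ (2 * h + 2 - k)) else 0) := by
      apply Finset.sum_subset (Finset.range_subset_range.mpr (by omega))
      intro x hx hx'
      simp only [Finset.mem_range, Nat.lt_succ_iff] at hx'
      rw [if_neg (by omega)]
    rw [hext, ← hshr]
    have hdrop : ∑ k ∈ Finset.range (2 * g + 1),
        (if k ≤ 2 * g then ((2 * g).choose k : Polynomial ℚ) *
          (Polynomial.X ^ k - Polynomial.X ^ (2 * h + 2 - k)) else 0) =
        ∑ k ∈ Finset.range (2 * g + 1),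
          (((2 * g).choose k : Polynomial ℚ) * Polynomial.X ^ k -
            ((2 * g).choose k : Polynomial ℚ) * Polynomial.X ^ (2 * h + 2 - k)) := by
      refine Finset.sum_congr rfl fun k hk => ?_
      simp only [Finset.mem_range, Nat.lt_succ_iff] at hk
      rw [if_pos hk]; ring
    rw [hdrop, Finset.sum_sub_distrib, ← binom_aux]
    have hrefl : ∑ k ∈ Finset.range (2 * g + 1),
        ((2 * g).choose k : Polynomial ℚ) * Polynomial.X ^ (2 * h + 2 - k) =
        Polynomial.X ^ (2 * h + 2 - 2 * g) * (1 + Polynomial.X) ^ (2 * g) := by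
      rw [← Finset.sum_range_reflect]
      have hc : ∀ k ∈ Finset.range (2 * g + 1),
          ((2 * g).choose (2 * g + 1 - 1 - k) : Polynomial ℚ) *
            Polynomial.X ^ (2 * h + 2 - (2 * g + 1 - 1 - k)) =
          Polynomial.X ^ (2 * h + 2 - 2 * g) *
            (((2 * g).choose k : Polynomial ℚ) * Polynomial.X ^ k) := by
        intro k hk
        simp only [Finset.mem_range, Nat.lt_succ_iff] at hk
        rw [show 2 * g + 1 - 1 - k = 2 * g - k by omega,
          Nat.choose_symm hk,
          show 2 * h + 2 - (2 * g - k) = (2 * h + 2 - 2 * g) + k by omega,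
          pow_add]
        ring
      rw [Finset.sum_congr rfl hc, ← Finset.mul_sum, ← binom_aux]
    rw [hrefl]
    ring
  have hne : (1 - Polynomial.X ^ 2 : Polynomial ℚ) ≠ 0 := by
    intro hcon
    have := congrArg (fun p => Polynomial.coeff p 0) hcon
    simp at this
  refine ⟨?_, K⟩
  apply mul_left_cancel₀ hne
  rw [K, show (1 - Polynomial.X ^ 2 : Polynomial ℚ) * ((1 + Polynomial.X) ^ (2 * g) *
      ∑ j ∈ Finset.range (h + 1 - g), Polynomial.X ^ (2 * j)) =
    (1 + Polynomial.X) ^ (2 * g) * ((1 - Polynomial.X ^ 2) *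
      ∑ j ∈ Finset.range (h + 1 - g), Polynomial.X ^ (2 * j)) by ring,
    geom_aux, show 2 * (h + 1 - g) = 2 * h + 2 - 2 * g by omega]
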